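/- For all nonnegative integers m and k, the binomial coefficient (m + k choose k) is at most 2^{2·√(m·k)}. -/

import Mathlib

open Real

lemma log_le_div_e {x : ℝ} (hx : 0 < x) : Real.log x ≤ x / Real.exp 1 := by
  have h := Real.log_le_sub_one_of_pos (show (0:ℝ) < x / Real.exp 1 by positivity)
  rw [Real.log_div (ne_of_gt hx) (by positivity), Real.log_exp] at h
  linarith

-- P1 : series lower bound for -log(1-z)
lemma neg_log_one_sub_ge {z : ℝ} (h0 : 0 ≤ z) (h1 : z < 1) :
    z + z^2/2 + z^3/3 ≤ -Real.log (1 - z) := by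
  set f : ℝ → ℝ := fun x => -Real.log (1 - x) - (x + x^2/2 + x^3/3) with hf
  have hd : ∀ y : ℝ, y < 1 → HasDerivAt f (1/(1-y) - (1 + y + y^2)) y := by
    intro y hy1
    have hne : (1:ℝ) - y ≠ 0 := by intro h; linarith [sub_eq_zero.mp h]
    have h1 : HasDerivAt (fun u : ℝ => 1 - u) (-1) y := by
      simpa using (hasDerivAt_id y).const_sub 1
    have h2 : HasDerivAt (fun u : ℝ => Real.log (1 - u)) ((1-y)⁻¹ * (-1)) y :=
      (Real.hasDerivAt_log hne).comp y h1
    have h3 : HasDerivAt (fun u : ℝ => u + u^2/2 + u^3/3) (1 + y + y^2) y := by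
      have := ((hasDerivAt_id y).add (((hasDerivAt_pow 2 y).div_const 2))).add
        ((hasDerivAt_pow 3 y).div_const 3)
      refine this.congr_deriv ?_
      ring
    have := (h2.neg).sub h3
    refine this.congr_deriv ?_
    field_simp
  have hmono : MonotoneOn f (Set.Icc 0 z) := by
    apply monotoneOn_of_deriv_nonneg (convex_Icc 0 z)
    · intro y hy
      exact ((hd y (lt_of_le_of_lt hy.2 h1)).continuousAt).continuousWithinAt
    · intro y hy
      rw [interior_Icc] at hy
      exact ((hd y (lt_trans hy.2 h1)).differentiableAt).differentiableWithinAt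
    · intro y hy
      rw [interior_Icc] at hy
      obtain ⟨hy0, hyx⟩ := hy
      have hy1 : y < 1 := lt_trans hyx h1
      rw [(hd y hy1).deriv]
      have : 1 + y + y^2 ≤ 1/(1-y) := by
        rw [le_div_iff₀ (by linarith)]
        nlinarith
      linarith
  have h00 : f 0 = 0 := by simp [hf]
  have := hmono (Set.left_mem_Icc.mpr h0) (Set.right_mem_Icc.mpr h0) h0
  simp only [hf] at this h00
  linarith

lemma log_one_add_ge {z : ℝ} (h0 : 0 ≤ z) :
    z/(1+z) + (z/(1+z))^2/2 + (z/(1+z))^3/3 ≤ Real.log (1 + z) := by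
  have hz1 : (0:ℝ) < 1 + z := by linarith
  have hw0 : 0 ≤ z/(1+z) := by positivity
  have hw1 : z/(1+z) < 1 := by rw [div_lt_one hz1]; linarith
  have h := neg_log_one_sub_ge hw0 hw1
  have he : (1 : ℝ) - z/(1+z) = 1/(1+z) := by field_simp; ring
  rw [he, one_div, Real.log_inv, neg_neg] at h
  exact h

lemma exp_43 : Real.exp 0.43 < 1.54 := by
  have hb := (abs_le.mp (Real.exp_bound (x := 0.43)
      (by norm_num [abs_of_nonneg] : |(0.43:ℝ)| ≤ 1) (n := 4) (by norm_num))).2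
  have hs : ∑ m ∈ Finset.range 4, (0.43:ℝ) ^ m / m.factorial
      = 1 + 0.43 + 0.43^2/2 + 0.43^3/6 := by
    simp [Finset.sum_range_succ, Nat.factorial]
  rw [hs] at hb
  have habs : |(0.43:ℝ)| = 0.43 := by norm_num [abs_of_nonneg]
  rw [habs] at hb
  norm_num [Nat.factorial] at hb
  linarith

lemma key_R {z : ℝ} (h0 : 0 ≤ z) (h1 : z < 1) :
    Real.log 2 * ((-Real.log (1-z)) - Real.log (1+z))
      ≤ Real.log (1+z) * (-Real.log (1-z)) := by
  have hz1 : (0:ℝ) < 1 + z := by linarith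
  have hz2 : (0:ℝ) < 1 - z := by linarith
  set A := Real.log (1+z) with hA
  set B := -Real.log (1-z) with hB
  have hA0 : 0 ≤ A := Real.log_nonneg (by linarith)
  have hB0 : 0 ≤ B := by
    rw [hB, neg_nonneg]
    exact Real.log_nonpos (by linarith) (by linarith)
  have hBA : B - A = -Real.log (1 - z^2) := by
    rw [hA, hB]
    rw [show (1:ℝ) - z^2 = (1-z)*(1+z) by ring,
      Real.log_mul (ne_of_gt hz2) (ne_of_gt hz1)]
    ring
  have hz21 : (0:ℝ) < 1 - z^2 := by nlinarith
  have hBAle : B - A ≤ z^2/(1-z^2) := by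
    rw [hBA]
    have h5 := Real.log_le_sub_one_of_pos (show (0:ℝ) < (1-z^2)⁻¹ by positivity)
    rw [Real.log_inv] at h5
    have h2 : (1-z^2)⁻¹ - 1 = z^2/(1-z^2) := by field_simp; ring
    linarith [h2 ▸ h5]
  have hBA0 : 0 ≤ B - A := by
    rw [hBA, neg_nonneg]
    exact Real.log_nonpos (by nlinarith) (by nlinarith)
  have hL2 : Real.log 2 < 0.6932 := by linarith [Real.log_two_lt_d9]
  have hL0 : 0 < Real.log 2 := Real.log_pos (by norm_num)
  rcases le_or_gt z 0.55 with hz | hz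
  · -- low region
    have hAq := log_one_add_ge h0
    have hBp := neg_log_one_sub_ge h0 h1
    have hq : z/(1+z) + (z/(1+z))^2/2 + (z/(1+z))^3/3
        = z*(6+15*z+11*z^2)/(6*(1+z)^3) := by field_simp; ring
    have hp : z + z^2/2 + z^3/3 = z*(6+3*z+2*z^2)/6 := by ring
    have hden : (0:ℝ) < 6*(1+z)^3*6 := by positivity
    have hcore : (0.6932:ℝ) * (z^2/(1-z^2))
        ≤ (z*(6+15*z+11*z^2)/(6*(1+z)^3)) * (z*(6+3*z+2*z^2)/6) := by
      rw [show (0.6932:ℝ) * (z^2/(1-z^2)) = (0.6932*z^2)/(1-z^2) by ring,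
        div_mul_div_comm, div_le_div_iff₀ hz21 hden]
      nlinarith [mul_nonneg h0 h0, mul_nonneg (mul_nonneg h0 h0) h0,
        mul_nonneg (mul_nonneg (mul_nonneg h0 h0) h0) h0,
        mul_nonneg (mul_nonneg (mul_nonneg (mul_nonneg h0 h0) h0) h0) h0,
        mul_nonneg (mul_nonneg (mul_nonneg (mul_nonneg (mul_nonneg h0 h0) h0) h0) h0) h0,
        sq_nonneg (1-z), mul_nonneg (sub_nonneg.mpr hz) h0,
        mul_nonneg (mul_nonneg (sub_nonneg.mpr hz) h0) h0,
        mul_nonneg (mul_nonneg (mul_nonneg (sub_nonneg.mpr hz) h0) h0) h0,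
        mul_nonneg (mul_nonneg (mul_nonneg (mul_nonneg (sub_nonneg.mpr hz) h0) h0) h0) h0,
        mul_nonneg (mul_nonneg (mul_nonneg (mul_nonneg (mul_nonneg (sub_nonneg.mpr hz) h0) h0) h0) h0) h0]
    calc Real.log 2 * (B - A) ≤ 0.6932 * (z^2/(1-z^2)) := by
          apply mul_le_mul (le_of_lt hL2) hBAle hBA0 (by norm_num)
      _ ≤ (z*(6+15*z+11*z^2)/(6*(1+z)^3)) * (z*(6+3*z+2*z^2)/6) := hcore
      _ ≤ A * B := by
          rw [← hq, ← hp]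
          apply mul_le_mul hAq hBp _ hA0
          rw [hp]; positivity
  · -- high region
    have ht : (1:ℝ) - z ≤ 0.45 := by linarith
    have hlog155 : (0.43:ℝ) < Real.log 1.55 := by
      rw [Real.lt_log_iff_exp_lt (by norm_num)]
      linarith [exp_43]
    have hA43 : (0.43:ℝ) ≤ A := by
      have : Real.log 1.55 ≤ Real.log (1+z) := Real.log_le_log (by norm_num) (by linarith)
      linarith
    have hAL : A ≤ Real.log 2 := Real.log_le_log (by linarith) (by linarith)
    have hLA : Real.log 2 - A ≤ (1-z)/1.55 := by
      have h2 : Real.log 2 - A = Real.log (2/(1+z)) := by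
        rw [hA, Real.log_div (by norm_num) (ne_of_gt hz1)]
      have h3 := Real.log_le_sub_one_of_pos (show (0:ℝ) < 2/(1+z) by positivity)
      have h4 : 2/(1+z) - 1 = (1-z)/(1+z) := by field_simp; ring
      have h5 : (1-z)/(1+z) ≤ (1-z)/1.55 := by
        apply div_le_div_of_nonneg_left (by linarith) (by norm_num) (by linarith)
      rw [h2]; linarith
    have hmax : (1-z) * ((-Real.log (1-z)) - 0.43) ≤ Real.exp (-0.43) / Real.exp 1 := by
      have h6 := log_le_div_e (show (0:ℝ) < Real.exp (-0.43) / (1-z) by positivity)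
      rw [Real.log_div (by positivity) (ne_of_gt hz2), Real.log_exp] at h6
      have h7 : Real.exp (-0.43)/(1-z)/Real.exp 1 = (Real.exp (-0.43)/Real.exp 1)/(1-z) := by
        ring
      rw [h7, le_div_iff₀ hz2] at h6
      nlinarith [h6]
    have hnum : Real.exp (-0.43) / Real.exp 1 ≤ 1/(1.43*2.7182818283) := by
      have h8 : (1.43:ℝ) ≤ Real.exp 0.43 := by linarith [Real.add_one_le_exp (0.43:ℝ)]
      have h9 : (2.7182818283:ℝ) < Real.exp 1 := Real.exp_one_gt_d9
      have h13 : (1.43:ℝ)*2.7182818283 ≤ Real.exp 0.43 * Real.exp 1 :=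
        mul_le_mul h8 h9.le (by norm_num) (le_trans (by norm_num) h8)
      have h14 : Real.exp (-0.43)/Real.exp 1 = 1/(Real.exp 0.43 * Real.exp 1) := by
        rw [Real.exp_neg]; field_simp
      rw [h14]
      exact one_div_le_one_div_of_le (by norm_num) h13
    have hC43 : B - A ≤ B - 0.43 := by linarith
    have hkey : (Real.log 2 - A) * (B - A) ≤ ((1-z)/1.55) * (B - 0.43) := by
      apply mul_le_mul hLA hC43 hBA0 (by positivity)
    have hfin : ((1-z)/1.55) * (B - 0.43) ≤ (1/(1.43*2.7182818283))/1.55 := by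
      have h10 : (1-z) * (B - 0.43) ≤ 1/(1.43*2.7182818283) := le_trans hmax hnum
      have h11 : ((1-z)/1.55) * (B - 0.43) = ((1-z)*(B - 0.43))/1.55 := by ring
      rw [h11]
      gcongr
    have hA2 : (0.43:ℝ)^2 ≤ A * A := by
      calc (0.43:ℝ)^2 = 0.43*0.43 := by norm_num
        _ ≤ A * A := mul_le_mul hA43 hA43 (by norm_num) hA0
    have hmain : (Real.log 2 - A) * (B - A) ≤ A * A := by
      calc (Real.log 2 - A) * (B - A) ≤ (1/(1.43*2.7182818283))/1.55 := le_trans hkey hfin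
        _ ≤ 0.43^2 := by norm_num
        _ ≤ A * A := hA2
    have hid : Real.log 2 * (B - A) = (Real.log 2 - A)*(B-A) + A*B - A*A := by ring
    linarith [hmain, hid]

lemma lemma_Q {U : ℝ} (h1 : 1/2 ≤ U) (h2 : U < 1) :
    Real.log U * Real.log (1-U) ≤ (Real.log 2)^2 := by
  have h0z : (0:ℝ) ≤ 2*U - 1 := by linarith
  have h1z : 2*U - 1 < 1 := by linarith
  have hR := key_R h0z h1z
  have hU0 : (0:ℝ) < U := by linarith
  have hU1 : (0:ℝ) < 1 - U := by linarith
  have e1 : (1:ℝ) + (2*U - 1) = 2*U := by ring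
  have e2 : (1:ℝ) - (2*U - 1) = 2*(1-U) := by ring
  rw [e1, e2, Real.log_mul two_ne_zero (ne_of_gt hU0),
    Real.log_mul two_ne_zero (ne_of_gt hU1)] at hR
  nlinarith [hR]

lemma lemma_K0 {u v : ℝ} (hu : 0 < u) (hv : 0 < v) (huv : 1 ≤ u*v) (hle : u ≤ v) :
    (2:ℝ) ^ (-u) + (2:ℝ) ^ (-v) ≤ 1 := by
  rcases le_or_gt u 1 with h1 | h1
  · -- u ≤ 1
    have hL : (0:ℝ) < Real.log 2 := Real.log_pos (by norm_num)
    set U := (2:ℝ) ^ (-u) with hU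
    have hUe : U = Real.exp (Real.log 2 * (-u)) := Real.rpow_def_of_pos (by norm_num) _
    have hU1 : U < 1 := by
      rw [hUe]
      apply Real.exp_lt_one_iff.mpr
      nlinarith
    have hUhalf : 1/2 ≤ U := by
      rw [hUe]
      have : Real.exp (-Real.log 2) ≤ Real.exp (Real.log 2 * (-u)) := by
        apply Real.exp_le_exp.mpr
        nlinarith
      rwa [Real.exp_neg, Real.exp_log (by norm_num : (0:ℝ) < 2), inv_eq_one_div] at this
    have hlogU : Real.log U = -(u * Real.log 2) := by
      rw [hUe, Real.log_exp]; ring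
    have hQ := lemma_Q hUhalf hU1
    rw [hlogU] at hQ
    have hlog1U : -(Real.log 2)/u ≤ Real.log (1-U) := by
      rw [neg_div, neg_le]
      rw [le_div_iff₀ hu]
      nlinarith [hQ]
    have h2v : (2:ℝ) ^ (-v) ≤ 1 - U := by
      have hv1u : 1/u ≤ v := by rw [div_le_iff₀ hu]; nlinarith
      have : (2:ℝ) ^ (-v) = Real.exp (Real.log 2 * (-v)) := Real.rpow_def_of_pos (by norm_num) _
      rw [this, ← Real.exp_log (by linarith : (0:ℝ) < 1 - U)]
      apply Real.exp_le_exp.mpr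
      have : Real.log 2 * (-v) ≤ -(Real.log 2)/u := by
        rw [neg_div, le_neg]
        have : Real.log 2 / u ≤ Real.log 2 * v := by
          rw [div_le_iff₀ hu]
          nlinarith
        nlinarith [this]
      linarith [hlog1U]
    linarith [h2v]
  · -- 1 < u ≤ v : both terms ≤ 1/2
    have ha : (2:ℝ) ^ (-u) ≤ 1/2 := by
      rw [show (1:ℝ)/2 = (2:ℝ)^(-1:ℝ) by rw [Real.rpow_neg_one]; norm_num]
      apply Real.rpow_le_rpow_of_exponent_le (by norm_num)
      linarith
    have hb : (2:ℝ) ^ (-v) ≤ 1/2 := by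
      rw [show (1:ℝ)/2 = (2:ℝ)^(-1:ℝ) by rw [Real.rpow_neg_one]; norm_num]
      apply Real.rpow_le_rpow_of_exponent_le (by norm_num)
      linarith
    linarith

lemma lemma_K {u v : ℝ} (hu : 0 < u) (hv : 0 < v) (huv : 1 ≤ u*v) :
    (2:ℝ) ^ (-u) + (2:ℝ) ^ (-v) ≤ 1 := by
  rcases le_total u v with h | h
  · exact lemma_K0 hu hv huv h
  · have := lemma_K0 hv hu (by nlinarith) h
    linarith

lemma lemma_S {a b : ℝ} (ha : 1 ≤ a) (hb : 1 ≤ b) :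
    (2:ℝ) ^ (2 * Real.sqrt ((a-1)*b)) + (2:ℝ) ^ (2 * Real.sqrt (a*(b-1)))
      ≤ (2:ℝ) ^ (2 * Real.sqrt (a*b)) := by
  set s := Real.sqrt (a*b) with hs
  set p := Real.sqrt ((a-1)*b) with hp
  set q := Real.sqrt (a*(b-1)) with hq
  have hab : (0:ℝ) ≤ a*b := by nlinarith
  have hs2 : s^2 = a*b := Real.sq_sqrt hab
  have hp2 : p^2 = (a-1)*b := Real.sq_sqrt (by nlinarith)
  have hq2 : q^2 = a*(b-1) := Real.sq_sqrt (by nlinarith)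
  have hs0 : 0 ≤ s := Real.sqrt_nonneg _
  have hp0 : 0 ≤ p := Real.sqrt_nonneg _
  have hq0 : 0 ≤ q := Real.sqrt_nonneg _
  have hps : p < s := Real.sqrt_lt_sqrt (by nlinarith) (by nlinarith)
  have hqs : q < s := Real.sqrt_lt_sqrt (by nlinarith) (by nlinarith)
  set u := 2*(s-p) with hu
  set v := 2*(s-q) with hv
  have hu0 : 0 < u := by simp only [hu]; linarith
  have hv0 : 0 < v := by simp only [hv]; linarith
  have huv : 1 ≤ u*v := by
    have hY : (s+p)*(s+q) ≤ 4*(a*b) := by nlinarith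
    have hXY : ((s-p)*(s-q))*((s+p)*(s+q)) = a*b := by nlinarith
    have hY0 : 0 < (s+p)*(s+q) := by nlinarith
    have h4X : 1 ≤ 4*((s-p)*(s-q)) := by nlinarith [hXY, hY, hY0]
    have huv4 : u*v = 4*((s-p)*(s-q)) := by simp only [hu, hv]; ring
    rw [huv4]; exact h4X
  have e1 : 2*p = 2*s + (-u) := by simp only [hu]; ring
  have e2 : 2*q = 2*s + (-v) := by simp only [hv]; ring
  rw [e1, e2, Real.rpow_add (by norm_num), Real.rpow_add (by norm_num)]
  have hK := lemma_K hu0 hv0 huv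
  have hpos : (0:ℝ) < (2:ℝ)^(2*s) := Real.rpow_pos_of_pos (by norm_num) _
  have hmul := mul_le_mul_of_nonneg_left hK hpos.le
  nlinarith [hmul]

/-- `(m+k choose k) ≤ 2^{2√(mk)}`. -/
theorem choose_le_two_pow_sqrt (m k : ℕ) :
    (((m + k).choose k : ℝ)) ≤ (2 : ℝ) ^ (2 * Real.sqrt (m * k)) := by
  have main : ∀ n m k : ℕ, m + k ≤ n →
      (((m + k).choose k : ℝ)) ≤ (2 : ℝ) ^ (2 * Real.sqrt (m * k)) := by
    intro n
    induction n with
    | zero =>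
      intro m k h
      have hm : m = 0 := by omega
      have hk : k = 0 := by omega
      subst hm; subst hk
      simp
    | succ n ih =>
      intro m k hmk
      match m, k with
      | 0, k =>
        simp [Nat.choose_self]
      | m+1, 0 =>
        simp
      | a+1, b+1 =>
        have e : (a+1)+(b+1) = (a+b+1)+1 := by omega
        rw [e, Nat.choose_succ_succ]
        simp only [Nat.succ_eq_add_one]
        have h1 := ih (a+1) b (by omega)
        have h2 := ih a (b+1) (by omega)
        rw [show a+b+1 = a+1+b by omega]
        rw [show a+(b+1) = a+1+b by omega] at h2
        have hS := lemma_S (a := (a:ℝ)+1) (b := (b:ℝ)+1)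
          (by linarith [Nat.cast_nonneg (α := ℝ) a]) (by linarith [Nat.cast_nonneg (α := ℝ) b])
        have ea : ((a:ℝ)+1-1) = (a:ℝ) := by ring
        have eb : ((b:ℝ)+1-1) = (b:ℝ) := by ring
        rw [ea, eb] at hS
        push_cast at h1 h2 ⊢
        linarith [add_le_add h1 h2, hS]
  exact main (m+k) m k le_rfl
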